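/- Suppose a graph G on {1,...,n} has the property that {k+1,...,n} is a clique, and rates ν_1,...,ν_n > 0 realize hard-core marginals θ_1,...,θ_n on G. Form G~ by adding a vertex n+1 adjacent exactly to {k+1,...,n}. For any θ_{n+1} with 0 < θ_{n+1} < 1 − (θ_{k+1}+...+θ_n), the rates ν~_i = ν_i for i ≤ k, ν~_i = ν_i · (1 − ∑_{j=k+1}^n θ_j)/(1 − θ_{n+1} − ∑_{j=k+1}^n θ_j) for k+1 ≤ i ≤ n, and ν~_{n+1} = θ_{n+1}/(1 − θ_{n+1} − ∑_{j=k+1}^n θ_j), realize hard-core marginals (θ_1,...,θ_n,θ_{n+1}) on G~. -/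

import Mathlib

open scoped Classical
open Finset

/-- Weight of a 0-1 configuration `z` with back-off rates `ν`. -/
noncomputable def hcWeight {n : ℕ} (ν : Fin n → ℝ) (z : Fin n → Bool) : ℝ :=
  ∏ i, if z i then ν i else 1

/-- `z` is an independent-set indicator vector for adjacency `A`. -/
def hcIndep {n : ℕ} (A : Fin n → Fin n → Prop) (z : Fin n → Bool) : Prop :=
  ∀ i j, A i j → ¬(z i = true ∧ z j = true)

/-- Normalizing constant of the hard-core model. -/
noncomputable def hcZ (n : ℕ) (A : Fin n → Fin n → Prop) (ν : Fin n → ℝ) : ℝ :=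
  ∑ z : Fin n → Bool, if hcIndep A z then hcWeight ν z else 0

/-- Marginal activity probability of node `i` in the hard-core model. -/
noncomputable def hcMarginal (n : ℕ) (A : Fin n → Fin n → Prop) (ν : Fin n → ℝ)
    (i : Fin n) : ℝ :=
  (∑ z : Fin n → Bool, if hcIndep A z ∧ z i = true then hcWeight ν z else 0) / hcZ n A ν

/-- node addition. `G` on `Fin n` (0-based; the clique is
`{i : k ≤ i.val}`, corresponding to 1-based `{k+1,…,n}`), rates `ν` realize
marginals `θ` on `G`. `G'` on `Fin (n+1)` adds the vertex `Fin.last n` adjacent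
exactly to the clique; with the rescaled rates `ν'` the marginals are
`(θ, t)` on `G'`. -/
theorem stmt12 (n k : ℕ) (hk : k ≤ n) (G : SimpleGraph (Fin n))
    (hclique : ∀ i j : Fin n, k ≤ i.val → k ≤ j.val → i ≠ j → G.Adj i j)
    (ν θ : Fin n → ℝ) (hν : ∀ i, 0 < ν i)
    (hmarg : ∀ i, hcMarginal n G.Adj ν i = θ i)
    (hS : ∑ j ∈ Finset.univ.filter (fun j : Fin n => k ≤ j.val), θ j < 1)
    (t : ℝ) (ht0 : 0 < t)
    (ht1 : t < 1 - ∑ j ∈ Finset.univ.filter (fun j : Fin n => k ≤ j.val), θ j)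
    (G' : SimpleGraph (Fin (n + 1)))
    (hG'1 : ∀ i j : Fin n, G'.Adj i.castSucc j.castSucc ↔ G.Adj i j)
    (hG'2 : ∀ i : Fin n, G'.Adj (Fin.last n) i.castSucc ↔ k ≤ i.val)
    (ν' : Fin (n + 1) → ℝ)
    (hν'1 : ∀ i : Fin n, i.val < k → ν' i.castSucc = ν i)
    (hν'2 : ∀ i : Fin n, k ≤ i.val → ν' i.castSucc =
      ν i * (1 - ∑ j ∈ Finset.univ.filter (fun j : Fin n => k ≤ j.val), θ j) /
        (1 - t - ∑ j ∈ Finset.univ.filter (fun j : Fin n => k ≤ j.val), θ j))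
    (hν'3 : ν' (Fin.last n) =
      t / (1 - t - ∑ j ∈ Finset.univ.filter (fun j : Fin n => k ≤ j.val), θ j)) :
    (∀ i : Fin n, hcMarginal (n + 1) G'.Adj ν' i.castSucc = θ i) ∧
      hcMarginal (n + 1) G'.Adj ν' (Fin.last n) = t := by
  classical
  set C : Finset (Fin n) := Finset.univ.filter (fun j : Fin n => k ≤ j.val) with hCdef
  set S : ℝ := ∑ j ∈ C, θ j with hSdef
  set D : ℝ := 1 - t - S with hDdef
  have hD0 : 0 < D := by rw [hDdef]; linarith
  have h1S : 0 < 1 - S := by linarith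
  set α : ℝ := (1 - S) / D with hαdef
  set β : ℝ := t / D with hβdef
  have hα0 : 0 < α := div_pos h1S hD0
  have hαβ : 1 + β = α := by
    rw [hαdef, hβdef, hDdef]
    field_simp [show (1 - t - S) ≠ 0 from by linarith]
    ring
  -- positivity of weights and of Z
  have hwpos : ∀ z : Fin n → Bool, 0 < hcWeight ν z := by
    intro z
    refine Finset.prod_pos fun i _ => ?_
    by_cases hzi : z i = true
    · simp [hzi, hν i]
    · simp [hzi]
  have hZterm : ∀ z : Fin n → Bool,
      0 ≤ if hcIndep G.Adj z then hcWeight ν z else 0 := by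
    intro z
    by_cases hz : hcIndep G.Adj z
    · simp [hz, (hwpos z).le]
    · simp [hz]
  have hZpos : 0 < hcZ n G.Adj ν := by
    have hfalse : hcIndep G.Adj (fun _ => false) := by
      intro i j _ h
      simp at h
    have h1 : (1:ℝ) ≤ hcZ n G.Adj ν := by
      have := Finset.single_le_sum (f := fun z : Fin n → Bool =>
        if hcIndep G.Adj z then hcWeight ν z else 0)
        (fun z _ => hZterm z) (Finset.mem_univ (fun _ => false))
      simpa [hcZ, hfalse, hcWeight] using this
    linarith
  -- marginal numerators
  have hM : ∀ i : Fin n,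
      (∑ z : Fin n → Bool, if hcIndep G.Adj z ∧ z i = true then hcWeight ν z else 0)
        = θ i * hcZ n G.Adj ν := by
    intro i
    have := hmarg i
    rw [hcMarginal, div_eq_iff hZpos.ne'] at this
    exact this
  -- at most one active clique vertex
  have hcount : ∀ z : Fin n → Bool, hcIndep G.Adj z →
      (Finset.univ.filter (fun i : Fin n => k ≤ i.val ∧ z i = true)).card ≤ 1 := by
    intro z hz
    by_contra h
    push_neg at h
    obtain ⟨i, hi, j, hj, hij⟩ := Finset.one_lt_card.mp h
    simp only [Finset.mem_filter] at hi hj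
    exact hz i j (hclique i j hi.2.1 hj.2.1 hij) ⟨hi.2.2, hj.2.2⟩
  have hcliqueSum : ∀ z : Fin n → Bool, hcIndep G.Adj z →
      (∑ i ∈ Finset.univ.filter (fun i : Fin n => k ≤ i.val ∧ z i = true), hcWeight ν z)
        = if ∃ i : Fin n, k ≤ i.val ∧ z i = true then hcWeight ν z else 0 := by
    intro z hz
    rw [Finset.sum_const]
    rcases Nat.le_one_iff_eq_zero_or_eq_one.mp (hcount z hz) with h0 | h1
    · rw [h0]
      rw [if_neg]
      · simp
      · rintro ⟨i, hi⟩
        have hmem : i ∈ Finset.univ.filter (fun i : Fin n => k ≤ i.val ∧ z i = true) :=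
          Finset.mem_filter.mpr ⟨Finset.mem_univ i, hi⟩
        rw [Finset.card_eq_zero.mp h0] at hmem
        exact absurd hmem (Finset.notMem_empty i)
    · rw [h1]
      obtain ⟨i, hi⟩ := Finset.card_pos.mp (by omega : 0 < (Finset.univ.filter
        (fun i : Fin n => k ≤ i.val ∧ z i = true)).card)
      rw [if_pos ⟨i, (Finset.mem_filter.mp hi).2⟩]
      simp
  have hprodC : ∀ z : Fin n → Bool, hcIndep G.Adj z →
      (∏ i : Fin n, if k ≤ i.val ∧ z i = true then α else 1)
        = if ∃ i : Fin n, k ≤ i.val ∧ z i = true then α else 1 := by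
    intro z hz
    rw [← Finset.prod_filter, Finset.prod_const]
    rcases Nat.le_one_iff_eq_zero_or_eq_one.mp (hcount z hz) with h0 | h1
    · rw [h0, pow_zero, if_neg]
      rintro ⟨i, hi⟩
      have hmem : i ∈ Finset.univ.filter (fun i : Fin n => k ≤ i.val ∧ z i = true) :=
        Finset.mem_filter.mpr ⟨Finset.mem_univ i, hi⟩
      rw [Finset.card_eq_zero.mp h0] at hmem
      exact absurd hmem (Finset.notMem_empty i)
    · rw [h1, pow_one]
      obtain ⟨i, hi⟩ := Finset.card_pos.mp (by omega : 0 < (Finset.univ.filter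
        (fun i : Fin n => k ≤ i.val ∧ z i = true)).card)
      rw [if_pos ⟨i, (Finset.mem_filter.mp hi).2⟩]
  -- weight of the restriction scales by the clique indicator
  have hwscale : ∀ z : Fin n → Bool,
      (∏ i : Fin n, if z i = true then ν' i.castSucc else 1)
        = hcWeight ν z * ∏ i : Fin n, if k ≤ i.val ∧ z i = true then α else 1 := by
    intro z
    rw [hcWeight, ← Finset.prod_mul_distrib]
    refine Finset.prod_congr rfl fun i _ => ?_
    by_cases hzi : z i = true
    · by_cases hki : k ≤ i.val
      · rw [if_pos hzi, if_pos hzi, if_pos ⟨hki, hzi⟩, hν'2 i hki, mul_div_assoc, ← hαdef]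
      · rw [if_pos hzi, if_pos hzi, if_neg (fun h => hki h.1), mul_one,
          hν'1 i (lt_of_not_ge hki)]
    · simp [hzi]
  -- independence on the extended graph
  have hindep : ∀ (z : Fin n → Bool) (b : Bool),
      hcIndep G'.Adj (Fin.snoc z b) ↔
        hcIndep G.Adj z ∧ (b = true → ¬∃ i : Fin n, k ≤ i.val ∧ z i = true) := by
    intro z b
    constructor
    · intro h
      constructor
      · intro i j hij hzij
        refine h i.castSucc j.castSucc ((hG'1 i j).mpr hij) ?_
        simpa [Fin.snoc_castSucc] using hzij
      · rintro hb ⟨i, hki, hzi⟩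
        exact h (Fin.last n) i.castSucc ((hG'2 i).mpr hki)
          (by simp [Fin.snoc_castSucc, Fin.snoc_last, hb, hzi])
    · rintro ⟨h1, h2⟩ i j hij hzij
      induction i using Fin.lastCases with
      | last =>
        induction j using Fin.lastCases with
        | last => exact G'.loopless.irrefl _ hij
        | cast j =>
          have hb : b = true := by simpa [Fin.snoc_last] using hzij.1
          have hzj : z j = true := by simpa [Fin.snoc_castSucc] using hzij.2
          exact h2 hb ⟨j, (hG'2 j).mp hij, hzj⟩
      | cast i =>
        induction j using Fin.lastCases with
        | last =>
          have hb : b = true := by simpa [Fin.snoc_last] using hzij.2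
          have hzi : z i = true := by simpa [Fin.snoc_castSucc] using hzij.1
          exact h2 hb ⟨i, (hG'2 i).mp hij.symm, hzi⟩
        | cast j =>
          exact h1 i j ((hG'1 i j).mp hij) (by simpa [Fin.snoc_castSucc] using hzij)
  -- weight of a snoc configuration
  have hwsnoc : ∀ (z : Fin n → Bool) (b : Bool),
      hcWeight ν' (Fin.snoc z b)
        = (∏ i : Fin n, if z i = true then ν' i.castSucc else 1)
            * (if b = true then ν' (Fin.last n) else 1) := by
    intro z b
    rw [hcWeight, Fin.prod_univ_castSucc]
    simp [Fin.snoc_castSucc, Fin.snoc_last]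
  -- key per-configuration identity
  have hkey : ∀ z : Fin n → Bool,
      (∑ b : Bool, if hcIndep G'.Adj (Fin.snoc z b) then hcWeight ν' (Fin.snoc z b) else 0)
        = α * (if hcIndep G.Adj z then hcWeight ν z else 0) := by
    intro z
    rw [Fintype.sum_bool]
    by_cases hz : hcIndep G.Adj z
    · rw [if_pos hz]
      by_cases hE : ∃ i : Fin n, k ≤ i.val ∧ z i = true
      · rw [if_neg (fun h => ((hindep z true).mp h).2 rfl hE),
          if_pos ((hindep z false).mpr ⟨hz, by simp⟩),
          hwsnoc, hwscale, hprodC z hz, if_pos hE]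
        simp only [Bool.false_eq_true, if_false, mul_one]
        ring
      · rw [if_pos ((hindep z true).mpr ⟨hz, fun _ => hE⟩),
          if_pos ((hindep z false).mpr ⟨hz, by simp⟩),
          hwsnoc, hwsnoc, hwscale, hprodC z hz, if_neg hE, hν'3]
        simp only [if_pos rfl, Bool.false_eq_true, if_false, mul_one, if_true]
        nlinarith [hαβ, hwpos z]
    · rw [if_neg hz, mul_zero,
        if_neg (fun h => hz ((hindep z true).mp h).1),
        if_neg (fun h => hz ((hindep z false).mp h).1)]
      ring
  -- reindexing sums over configurations of the extended graph
  have hsum : ∀ F : (Fin (n + 1) → Bool) → ℝ,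
      (∑ g : Fin (n + 1) → Bool, F g)
        = ∑ z : Fin n → Bool, ∑ b : Bool, F (Fin.snoc z b) := by
    intro F
    have hbij : Function.Bijective
        (fun p : (Fin n → Bool) × Bool => (Fin.snoc p.1 p.2 : Fin (n + 1) → Bool)) := by
      constructor
      · rintro ⟨z₁, b₁⟩ ⟨z₂, b₂⟩ h
        have h1 : z₁ = z₂ := funext fun i => by
          simpa [Fin.snoc_castSucc] using congrFun h i.castSucc
        have h2 : b₁ = b₂ := by
          simpa [Fin.snoc_last] using congrFun h (Fin.last n)
        simp [h1, h2]
      · intro g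
        refine ⟨(fun i => g i.castSucc, g (Fin.last n)), ?_⟩
        funext i
        induction i using Fin.lastCases with
        | last => simp [Fin.snoc_last]
        | cast i => simp [Fin.snoc_castSucc]
    rw [← Fintype.sum_bijective _ hbij (fun p => F (Fin.snoc p.1 p.2)) F (fun p => rfl),
      Fintype.sum_prod_type]
  -- the new partition function
  have hZ' : hcZ (n + 1) G'.Adj ν' = α * hcZ n G.Adj ν := by
    rw [hcZ, hsum fun g => if hcIndep G'.Adj g then hcWeight ν' g else 0]
    rw [hcZ, Finset.mul_sum]
    exact Finset.sum_congr rfl fun z _ => hkey z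
  have hZ'pos : 0 < hcZ (n + 1) G'.Adj ν' := by
    rw [hZ']
    exact mul_pos hα0 hZpos
  constructor
  · -- marginals of old vertices
    intro i
    have hnum : (∑ g : Fin (n + 1) → Bool,
        if hcIndep G'.Adj g ∧ g i.castSucc = true then hcWeight ν' g else 0)
          = α * (∑ z : Fin n → Bool,
              if hcIndep G.Adj z ∧ z i = true then hcWeight ν z else 0) := by
      rw [hsum fun g => if hcIndep G'.Adj g ∧ g i.castSucc = true then hcWeight ν' g else 0,
        Finset.mul_sum]
      refine Finset.sum_congr rfl fun z _ => ?_
      by_cases hzi : z i = true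
      · have : ∀ b : Bool, (hcIndep G'.Adj (Fin.snoc z b) ∧
            (Fin.snoc z b : Fin (n + 1) → Bool) i.castSucc = true) ↔ hcIndep G'.Adj (Fin.snoc z b) := by
          intro b
          simp [Fin.snoc_castSucc, hzi]
        simp only [this, hzi, and_true]
        exact hkey z
      · have : ∀ b : Bool, ¬(hcIndep G'.Adj (Fin.snoc z b) ∧
            (Fin.snoc z b : Fin (n + 1) → Bool) i.castSucc = true) := by
          intro b h
          rw [Fin.snoc_castSucc] at h
          exact hzi h.2
        simp [this, hzi]
    rw [hcMarginal, hnum, hM i, hZ', mul_div_mul_left _ _ hα0.ne',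
      mul_div_assoc, div_self hZpos.ne', mul_one]
  · -- marginal of the new vertex
    have hkey3 : ∀ z : Fin n → Bool,
        (∑ b : Bool, if hcIndep G'.Adj (Fin.snoc z b) ∧
            (Fin.snoc z b : Fin (n + 1) → Bool) (Fin.last n) = true
              then hcWeight ν' (Fin.snoc z b) else 0)
          = β * (if hcIndep G.Adj z ∧ ¬∃ i : Fin n, k ≤ i.val ∧ z i = true
              then hcWeight ν z else 0) := by
      intro z
      rw [Fintype.sum_bool]
      have hfalse : ¬(hcIndep G'.Adj (Fin.snoc z false) ∧
          (Fin.snoc z false : Fin (n + 1) → Bool) (Fin.last n) = true) := by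
        rintro ⟨-, hb⟩
        rw [Fin.snoc_last] at hb
        exact Bool.false_ne_true hb
      rw [if_neg hfalse, add_zero]
      by_cases h : hcIndep G.Adj z ∧ ¬∃ i : Fin n, k ≤ i.val ∧ z i = true
      · have htrue : hcIndep G'.Adj (Fin.snoc z true) ∧
            (Fin.snoc z true : Fin (n + 1) → Bool) (Fin.last n) = true :=
          ⟨(hindep z true).mpr ⟨h.1, fun _ => h.2⟩, by rw [Fin.snoc_last]⟩
        rw [if_pos htrue, if_pos h, hwsnoc, hwscale, hprodC z h.1, if_neg h.2, hν'3]
        simp only [eq_self_iff_true, if_true]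
        ring
      · rw [if_neg h, mul_zero, if_neg]
        rintro ⟨hi, -⟩
        exact h ⟨((hindep z true).mp hi).1, ((hindep z true).mp hi).2 rfl⟩
    -- split Z into clique-active and clique-free parts
    have hZ0 : (∑ z : Fin n → Bool, if hcIndep G.Adj z ∧
        ¬∃ i : Fin n, k ≤ i.val ∧ z i = true then hcWeight ν z else 0)
          = (1 - S) * hcZ n G.Adj ν := by
      have hsome : (∑ z : Fin n → Bool, if hcIndep G.Adj z ∧
          (∃ i : Fin n, k ≤ i.val ∧ z i = true) then hcWeight ν z else 0)
            = S * hcZ n G.Adj ν := by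
        have hswap : (∑ z : Fin n → Bool, if hcIndep G.Adj z ∧
            (∃ i : Fin n, k ≤ i.val ∧ z i = true) then hcWeight ν z else 0)
              = ∑ j ∈ C, (∑ z : Fin n → Bool,
                  if hcIndep G.Adj z ∧ z j = true then hcWeight ν z else 0) := by
          rw [Finset.sum_comm]
          refine Finset.sum_congr rfl fun z _ => ?_
          by_cases hz : hcIndep G.Adj z
          · have h1 : (∑ j ∈ C, if hcIndep G.Adj z ∧ z j = true then hcWeight ν z else 0)
                = ∑ j ∈ Finset.univ.filter (fun i : Fin n => k ≤ i.val ∧ z i = true),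
                    hcWeight ν z := by
              rw [hCdef, Finset.sum_filter, Finset.sum_filter]
              refine Finset.sum_congr rfl fun j _ => ?_
              by_cases hkj : k ≤ j.val <;> by_cases hzj : z j = true <;>
                simp [hkj, hzj, hz]
            rw [h1, hcliqueSum z hz]
            by_cases hE : ∃ i : Fin n, k ≤ i.val ∧ z i = true
            · rw [if_pos hE, if_pos ⟨hz, hE⟩]
            · rw [if_neg hE, if_neg (fun h => hE h.2)]
          · simp [hz]
        rw [hswap]
        rw [hSdef, Finset.sum_mul]
        exact Finset.sum_congr rfl fun j _ => hM j
      have hsplit : hcZ n G.Adj ν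
          = (∑ z : Fin n → Bool, if hcIndep G.Adj z ∧
              ¬∃ i : Fin n, k ≤ i.val ∧ z i = true then hcWeight ν z else 0)
            + (∑ z : Fin n → Bool, if hcIndep G.Adj z ∧
              (∃ i : Fin n, k ≤ i.val ∧ z i = true) then hcWeight ν z else 0) := by
        rw [hcZ, ← Finset.sum_add_distrib]
        refine Finset.sum_congr rfl fun z _ => ?_
        by_cases hz : hcIndep G.Adj z
        · by_cases hE : ∃ i : Fin n, k ≤ i.val ∧ z i = true
          · rw [if_pos hz, if_neg (fun h => h.2 hE), if_pos ⟨hz, hE⟩, zero_add]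
          · rw [if_pos hz, if_pos ⟨hz, hE⟩, if_neg (fun h => hE h.2), add_zero]
        · simp [hz]
      rw [hsome] at hsplit
      linarith
    have hnum : (∑ g : Fin (n + 1) → Bool,
        if hcIndep G'.Adj g ∧ g (Fin.last n) = true then hcWeight ν' g else 0)
          = β * ((1 - S) * hcZ n G.Adj ν) := by
      rw [hsum fun g => if hcIndep G'.Adj g ∧ g (Fin.last n) = true then hcWeight ν' g else 0]
      rw [← hZ0, Finset.mul_sum]
      exact Finset.sum_congr rfl fun z _ => hkey3 z
    rw [hcMarginal, hnum, hZ', div_eq_iff (mul_pos hα0 hZpos).ne']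
    have hβα : β * (1 - S) = t * α := by
      rw [hαdef, hβdef]
      field_simp
    nlinarith [hβα, hZpos]
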